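/- Let f: ℂ → ℂ be holomorphic on a disc of radius 2r around s₀ with |f(s₀)| ≤ δ and |f'(s)| ≥ m > 0 and |f''(s)| ≤ M on that disc. If δ ≤ m²/(4M) and δ/m ≤ r, then f has a zero s* with |s* - s₀| ≤ 2δ/m. -/

import Mathlib

open Metric Set

/-- Convex combination algebra in `ℂ`. -/
lemma seg_aux (a b : ℝ) (hab : a + b = 1) (s₀ s₁ : ℂ) :
    a • s₀ + b • s₁ - s₀ = b • (s₁ - s₀) := by
  have h : (a : ℂ) + b = 1 := by exact_mod_cast hab
  rw [Complex.real_smul, Complex.real_smul, Complex.real_smul]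
  linear_combination s₀ * h

/-- Mean value bound: `|f' ξ - f' s₀| ≤ M |ξ - s₀|` on the ball. -/
lemma deriv_lip_aux (f : ℂ → ℂ) (s₀ : ℂ) (R M : ℝ)
    (hf : DifferentiableOn ℂ f (Metric.ball s₀ R))
    (hdd : ∀ s ∈ Metric.ball s₀ R, ‖deriv (deriv f) s‖ ≤ M)
    (ξ : ℂ) (hξ : ξ ∈ Metric.ball s₀ R) :
    ‖deriv f ξ - deriv f s₀‖ ≤ M * ‖ξ - s₀‖ := by
  have hR : 0 < R := dist_nonneg.trans_lt (Metric.mem_ball.mp hξ)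
  have hs₀ : s₀ ∈ Metric.ball s₀ R := Metric.mem_ball_self hR
  have hAn : AnalyticOnNhd ℂ f (Metric.ball s₀ R) := hf.analyticOnNhd Metric.isOpen_ball
  have hAn' : AnalyticOnNhd ℂ (deriv f) (Metric.ball s₀ R) := hAn.deriv
  have hseg : segment ℝ s₀ ξ ⊆ Metric.ball s₀ R :=
    (convex_ball s₀ R).segment_subset hs₀ hξ
  have key : ‖deriv f ξ - deriv f s₀‖ ≤ M * ‖ξ - s₀‖ := by
    apply Convex.norm_image_sub_le_of_norm_deriv_le
      (f := deriv f) (s := segment ℝ s₀ ξ)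
    · intro x hx
      exact (hAn' x (hseg hx)).differentiableAt
    · intro x hx
      exact hdd x (hseg hx)
    · exact convex_segment _ _
    · exact left_mem_segment _ _ _
    · exact right_mem_segment _ _ _
  exact key

set_option maxHeartbeats 1000000 in
/-- Quantitative Newton's method: let `f` be holomorphic on the disc of radius `2r`
around `s₀` with `|f(s₀)| ≤ δ`, `|f'| ≥ m > 0` and `|f''| ≤ M` on that disc.
If `δ ≤ m²/(4M)` and `δ/m ≤ r`, then `f` has a zero `s*` with `|s* - s₀| ≤ 2δ/m`. -/
theorem stmt_13 (f : ℂ → ℂ) (s₀ : ℂ) (r δ m M : ℝ)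
    (hr : 0 < r) (hm : 0 < m) (hM : 0 < M)
    (hf : DifferentiableOn ℂ f (Metric.ball s₀ (2 * r)))
    (h0 : ‖f s₀‖ ≤ δ)
    (hd : ∀ s ∈ Metric.ball s₀ (2 * r), m ≤ ‖deriv f s‖)
    (hdd : ∀ s ∈ Metric.ball s₀ (2 * r), ‖deriv (deriv f) s‖ ≤ M)
    (h1 : δ ≤ m ^ 2 / (4 * M)) (h2 : δ / m ≤ r) :
    ∃ s : ℂ, ‖s - s₀‖ ≤ 2 * δ / m ∧ f s = 0 := by
  have hδ0 : 0 ≤ δ := (norm_nonneg _).trans h0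
  set d : ℝ := δ / m with hd_def
  have hd0 : 0 ≤ d := div_nonneg hδ0 hm.le
  -- key size inequality : M * d ≤ m / 4
  have hMd : M * d ≤ m / 4 := by
    show M * (δ / m) ≤ m / 4
    rw [← mul_div_assoc, div_le_div_iff₀ hm (by norm_num : (0:ℝ) < 4)]
    nlinarith [(le_div_iff₀ (by positivity : (0:ℝ) < 4 * M)).mp h1]
  have hs₀mem : s₀ ∈ Metric.ball s₀ (2 * r) := Metric.mem_ball_self (by positivity)
  set A : ℂ := deriv f s₀ with hA_def
  have hAm : m ≤ ‖A‖ := hd s₀ hs₀mem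
  have hAne : A ≠ 0 := by
    intro h
    rw [h] at hAm
    simp at hAm
    exact absurd hAm (not_le.mpr hm)
  have hAabs : 0 < ‖A‖ := lt_of_lt_of_le hm hAm
  set s₁ : ℂ := s₀ - f s₀ / A with hs₁_def
  have hs₁dist : ‖s₁ - s₀‖ ≤ d := by
    have he : s₁ - s₀ = -(f s₀ / A) := by rw [hs₁_def]; ring
    rw [he, norm_neg, norm_div]
    exact div_le_div₀ hδ0 h0 hm hAm
  -- the Newton map
  set T : ℂ → ℂ := fun s => s - f s / A with hT_def
  -- the invariant ball
  set S : Set ℂ := Metric.closedBall s₁ (d / 2) with hS_def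
  have hSsub : ∀ x ∈ S, ‖x - s₀‖ ≤ 3 / 2 * d := by
    intro x hx
    have h1' : ‖x - s₁‖ ≤ d / 2 := by
      simpa [Complex.dist_eq] using (Metric.mem_closedBall.mp hx)
    calc ‖x - s₀‖
        = ‖(x - s₁) + (s₁ - s₀)‖ := by
          rw [show x - s₀ = (x - s₁) + (s₁ - s₀) from by ring]
      _ ≤ ‖x - s₁‖ + ‖s₁ - s₀‖ := norm_add_le _ _
      _ ≤ d / 2 + d := add_le_add h1' hs₁dist
      _ = 3 / 2 * d := by ring
  have hSball : S ⊆ Metric.ball s₀ (2 * r) := by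
    intro x hx
    have hx' := hSsub x hx
    have hdr : d ≤ r := h2
    rw [Metric.mem_ball, Complex.dist_eq]
    calc ‖x - s₀‖ ≤ 3 / 2 * d := hx'
      _ ≤ 3 / 2 * r := by nlinarith
      _ < 2 * r := by nlinarith
  -- derivative of T
  have hTderiv : ∀ x ∈ Metric.ball s₀ (2 * r), HasDerivAt T (1 - deriv f x / A) x := by
    intro x hx
    have hfd : DifferentiableAt ℂ f x :=
      (hf.analyticOnNhd Metric.isOpen_ball x hx).differentiableAt
    exact (hasDerivAt_id x).sub (hfd.hasDerivAt.div_const A)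
  -- bound on deriv T on S
  have hTbound : ∀ x ∈ S, ‖deriv T x‖ ≤ 3 / 8 := by
    intro x hx
    have hxball := hSball hx
    rw [(hTderiv x hxball).deriv]
    have h1' : ‖deriv f x - A‖ ≤ M * ‖x - s₀‖ :=
      deriv_lip_aux f s₀ (2 * r) M hf hdd x hxball
    have h2' : ‖x - s₀‖ ≤ 3 / 2 * d := hSsub x hx
    have heq : (1 : ℂ) - deriv f x / A = (A - deriv f x) / A := by
      rw [sub_div, div_self hAne]
    rw [heq, norm_div]
    have hnum : ‖A - deriv f x‖ ≤ M * (3 / 2 * d) := by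
      rw [← norm_neg]
      simp only [neg_sub]
      calc ‖deriv f x - A‖ ≤ M * ‖x - s₀‖ := h1'
        _ ≤ M * (3 / 2 * d) := by nlinarith [norm_nonneg (x - s₀)]
    calc ‖A - deriv f x‖ / ‖A‖
        ≤ M * (3 / 2 * d) / m := by
          apply div_le_div₀ (by nlinarith) hnum hm hAm
      _ ≤ 3 / 8 := by
          rw [div_le_iff₀ hm]
          nlinarith
  -- Lipschitz estimate on S
  have hTlip : ∀ x ∈ S, ∀ y ∈ S, ‖T y - T x‖ ≤ 3 / 8 * ‖y - x‖ := by
    intro x hx y hy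
    apply Convex.norm_image_sub_le_of_norm_deriv_le (f := T) (s := S)
    · intro z hz
      exact (hTderiv z (hSball hz)).differentiableAt
    · exact hTbound
    · exact convex_closedBall _ _
    · exact hx
    · exact hy
  -- |f s₁| ≤ M * d^2
  have hfs₁ : ‖f s₁‖ ≤ M * d ^ 2 := by
    set g : ℂ → ℂ := fun s => f s - A * s with hg_def
    have hsegd : ∀ x ∈ segment ℝ s₀ s₁, ‖x - s₀‖ ≤ d := by
      rintro x ⟨a, b, ha, hb, hab, rfl⟩
      rw [seg_aux a b hab s₀ s₁]
      have hsm : ‖b • (s₁ - s₀)‖ = b * ‖s₁ - s₀‖ := by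
        rw [norm_smul, Real.norm_eq_abs, abs_of_nonneg hb]
      rw [hsm]
      nlinarith [norm_nonneg (s₁ - s₀), hs₁dist]
    have hseg : segment ℝ s₀ s₁ ⊆ Metric.ball s₀ (2 * r) := by
      intro x hx
      rw [Metric.mem_ball, Complex.dist_eq]
      calc ‖x - s₀‖ ≤ d := hsegd x hx
        _ ≤ r := h2
        _ < 2 * r := by linarith
    have hgderiv : ∀ x ∈ segment ℝ s₀ s₁, HasDerivAt g (deriv f x - A) x := by
      intro x hx
      have hfd : DifferentiableAt ℂ f x :=
        (hf.analyticOnNhd Metric.isOpen_ball x (hseg hx)).differentiableAt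
      have h := hfd.hasDerivAt.sub ((hasDerivAt_id' x).const_mul A)
      rw [mul_one] at h
      exact h
    have key : ‖g s₁ - g s₀‖ ≤ M * d * ‖s₁ - s₀‖ := by
      apply Convex.norm_image_sub_le_of_norm_deriv_le (f := g) (s := segment ℝ s₀ s₁)
      · intro z hz
        exact (hgderiv z hz).differentiableAt
      · intro z hz
        rw [(hgderiv z hz).deriv]
        have h1' : ‖deriv f z - A‖ ≤ M * ‖z - s₀‖ :=
          deriv_lip_aux f s₀ (2 * r) M hf hdd z (hseg hz)
        have h2' := hsegd z hz
        calc (‖deriv f z - A‖ : ℝ) = ‖deriv f z - A‖ := rfl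
          _ ≤ M * ‖z - s₀‖ := h1'
          _ ≤ M * d := by nlinarith [norm_nonneg (z - s₀)]
      · exact convex_segment _ _
      · exact left_mem_segment _ _ _
      · exact right_mem_segment _ _ _
    have hgs : g s₁ - g s₀ = f s₁ := by
      show (f s₁ - A * s₁) - (f s₀ - A * s₀) = f s₁
      have hA' : A * (s₀ - s₁) = f s₀ := by rw [hs₁_def]; field_simp; ring
      linear_combination hA'
    rw [hgs] at key
    calc ‖f s₁‖ = ‖f s₁‖ := rfl
      _ ≤ M * d * ‖s₁ - s₀‖ := key
      _ ≤ M * d * d := by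
          have hn : ‖s₁ - s₀‖ ≤ d := hs₁dist
          exact mul_le_mul_of_nonneg_left hn (mul_nonneg hM.le hd0)
      _ = M * d ^ 2 := by ring
  -- T s₁ close to s₁
  have hTs₁ : ‖T s₁ - s₁‖ ≤ d / 4 := by
    have he : T s₁ - s₁ = -(f s₁ / A) := by show s₁ - f s₁ / A - s₁ = -(f s₁ / A); ring
    rw [he, norm_neg, norm_div]
    calc ‖f s₁‖ / ‖A‖ ≤ M * d ^ 2 / m :=
          div_le_div₀ (by positivity) hfs₁ hm hAm
      _ ≤ d / 4 := by
          rw [div_le_div_iff₀ hm (by norm_num : (0:ℝ) < 4)]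
          nlinarith [mul_le_mul_of_nonneg_left hMd hd0]
  -- T maps S to S
  have hmapsTo : MapsTo T S S := by
    intro x hx
    rw [hS_def, Metric.mem_closedBall, Complex.dist_eq]
    have hlip := hTlip s₁ (Metric.mem_closedBall_self (by linarith)) x hx
    have hxd : ‖x - s₁‖ ≤ d / 2 := by
      simpa [Complex.dist_eq] using Metric.mem_closedBall.mp hx
    calc ‖T x - s₁‖
        = ‖(T x - T s₁) + (T s₁ - s₁)‖ := by
          rw [show T x - s₁ = (T x - T s₁) + (T s₁ - s₁) from by ring]
      _ ≤ ‖T x - T s₁‖ + ‖T s₁ - s₁‖ := norm_add_le _ _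
      _ ≤ 3 / 8 * ‖x - s₁‖ + d / 4 := add_le_add hlip hTs₁
      _ ≤ 3 / 8 * (d / 2) + d / 4 := by nlinarith [norm_nonneg (x - s₁)]
      _ ≤ d / 2 := by nlinarith
  -- the contraction
  have hScomplete : IsComplete S := Metric.isClosed_closedBall.isComplete
  have hKcoe : ((3/8 : NNReal) : ℝ) = 3/8 := by norm_num
  have hcontr : ContractingWith (3/8 : NNReal) (hmapsTo.restrict T S S) := by
    constructor
    · rw [← NNReal.coe_lt_coe, hKcoe]; norm_num
    · apply LipschitzWith.of_dist_le_mul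
      rintro ⟨x, hx⟩ ⟨y, hy⟩
      have h := hTlip y hy x hx
      simp only [Subtype.dist_eq, MapsTo.val_restrict_apply, Complex.dist_eq, hKcoe]
      calc ‖T x - T y‖ = ‖T x - T y‖ := rfl
        _ ≤ 3 / 8 * ‖x - y‖ := h
        _ = 3 / 8 * ‖x - y‖ := rfl
  have hs₁S : s₁ ∈ S := Metric.mem_closedBall_self (by linarith)
  obtain ⟨y, hyS, hfix, -, -⟩ :=
    hcontr.exists_fixedPoint' hScomplete hmapsTo hs₁S (edist_ne_top _ _)
  refine ⟨y, ?_, ?_⟩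
  · have h1' : ‖y - s₁‖ ≤ d / 2 := by
      simpa [Complex.dist_eq] using Metric.mem_closedBall.mp hyS
    calc ‖y - s₀‖
        = ‖(y - s₁) + (s₁ - s₀)‖ := by
          rw [show y - s₀ = (y - s₁) + (s₁ - s₀) from by ring]
      _ ≤ ‖y - s₁‖ + ‖s₁ - s₀‖ := norm_add_le _ _
      _ ≤ d / 2 + d := add_le_add h1' hs₁dist
      _ = 3 / 2 * d := by ring
      _ ≤ 2 * d := by linarith
      _ = 2 * δ / m := by rw [hd_def]; ring
  · have hTy : T y = y := hfix
    have hTy' : y - f y / A = y := hTy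
    have hzero : f y / A = 0 := sub_eq_self.mp hTy'
    rcases div_eq_zero_iff.mp hzero with h | h
    · exact h
    · exact absurd h hAne
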